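/- Let V₁, …, V_K be bounded random variables and let Ω = E₁ ∪ … ∪ E_K be a partition into events. Suppose that for all j ≠ k, E[V_k · 1_{E_j}] ≤ E[V_j · 1_{E_j}] (on event E_j, executing the actually-chosen policy j is at least as good in expectation as counterfactually executing policy k). If additionally V_k ≥ V_l almost surely for all k, then for each k: E[V_k | E_k]·P(E_k) + (1 − P(E_k))·V_l ≤ E[V_k] ≤ Σ_{j=1}^K E[V_j | E_j]·P(E_j). -/

import Mathlib

open MeasureTheory

/-- causal bound (4) of Theorem 1. Partition `E 1, …, E K` of `Ω`,
counterfactual returns `V k` with `V k ≥ V_l` a.s., and expert optimality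
`E[V k · 1_{E j}] ≤ E[V j · 1_{E j}]` for `j ≠ k`.  Then for each `k`,
`E[V k | E k] P(E k) + (1 − P(E k)) V_l ≤ E[V k] ≤ Σ_j E[V j | E j] P(E j)`. -/
theorem causal_bound_partition (Ω : Type*) [MeasurableSpace Ω] (P : Measure Ω)
    [IsProbabilityMeasure P] (K : ℕ) (E : Fin K → Set Ω)
    (hEmeas : ∀ k, MeasurableSet (E k))
    (hdisj : Pairwise (Function.onFun Disjoint E))
    (hcover : (⋃ k, E k) = Set.univ)
    (hpos : ∀ k, 0 < P (E k))
    (V : Fin K → Ω → ℝ) (hVint : ∀ k, Integrable (V k) P)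
    (Vl : ℝ) (hVl : ∀ k, ∀ᵐ x ∂P, Vl ≤ V k x)
    (hopt : ∀ j k : Fin K, j ≠ k →
      ∫ x in E j, V k x ∂P ≤ ∫ x in E j, V j x ∂P)
    (k : Fin K) :
    ((∫ x in E k, V k x ∂P) / (P (E k)).toReal) * (P (E k)).toReal
        + (1 - (P (E k)).toReal) * Vl
      ≤ ∫ x, V k x ∂P ∧
    ∫ x, V k x ∂P
      ≤ ∑ j : Fin K, ((∫ x in E j, V j x ∂P) / (P (E j)).toReal) * (P (E j)).toReal := by
  have hne : ∀ j : Fin K, (P (E j)).toReal ≠ 0 := fun j =>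
    ENNReal.toReal_ne_zero.2 ⟨(hpos j).ne', measure_ne_top _ _⟩
  have hsimp : ∀ j : Fin K,
      ((∫ x in E j, V j x ∂P) / (P (E j)).toReal) * (P (E j)).toReal
        = ∫ x in E j, V j x ∂P := fun j => div_mul_cancel₀ _ (hne j)
  have hsplit : ∀ f : Ω → ℝ, Integrable f P →
      ∫ x, f x ∂P = ∑ j : Fin K, ∫ x in E j, f x ∂P := by
    intro f hf
    rw [← setIntegral_univ, ← hcover,
      integral_iUnion_fintype hEmeas hdisj fun j => hf.integrableOn]
  constructor
  · rw [hsimp, hsplit (V k) (hVint k)]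
    have hk : ∫ x in (E k)ᶜ, V k x ∂P + ∫ x in E k, V k x ∂P = ∑ j, ∫ x in E j, V k x ∂P := by
      rw [← hsplit (V k) (hVint k), ← integral_add_compl (hEmeas k) (hVint k)]
      ring
    rw [← hk]
    have hlow : (1 - (P (E k)).toReal) * Vl ≤ ∫ x in (E k)ᶜ, V k x ∂P := by
      have : ∫ x in (E k)ᶜ, Vl ∂P ≤ ∫ x in (E k)ᶜ, V k x ∂P := by
        apply setIntegral_mono_ae (integrableOn_const (measure_ne_top _ _))
          (hVint k).integrableOn
        exact (hVl k).mono fun x hx => hx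
      rw [setIntegral_const, smul_eq_mul, measureReal_compl (hEmeas k),
        probReal_univ] at this
      exact this
    linarith
  · rw [hsplit (V k) (hVint k)]
    apply Finset.sum_le_sum
    intro j _
    rw [hsimp j]
    rcases eq_or_ne j k with rfl | h
    · exact le_refl _
    · exact hopt j k (h.symm ∘ Eq.symm)
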